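/- Define forests of height at most k over a finite label set B by F₀ = Multiset B and F_{k+1} = Multiset (B ⊕ F_k), with embedding order given at each level by the multiset extension of (equality on B at leaves, disjoint-sum of equality on B and the forest embedding on F_k). Then for every k, the forest embedding on F_k is a well-quasi-order. -/

import Mathlib

/-- A well-quasi-order: every infinite sequence is good. -/
def IsWQO {X : Type*} (le : X → X → Prop) : Prop :=
  ∀ f : ℕ → X, ∃ i j : ℕ, i < j ∧ le (f i) (f j)

/-- Multiset embedding: `μ₁` embeds into `μ₂` iff `μ₁` is pointwise below
(via `le`) some submultiset of `μ₂`. -/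
def MultisetEmb {X : Type*} (le : X → X → Prop) (μ₁ μ₂ : Multiset X) : Prop :=
  ∃ ν : Multiset X, ν ≤ μ₂ ∧ Multiset.Rel le μ₁ ν

/-- Forests of height at most `k` over labels `B`. -/
def Forest (B : Type) : ℕ → Type
  | 0 => Multiset B
  | k + 1 => Multiset (B ⊕ Forest B k)

/-- The forest embedding order. -/
def ForestLe (B : Type) : ∀ k, Forest B k → Forest B k → Prop
  | 0 => MultisetEmb (Eq : B → B → Prop)
  | k + 1 => MultisetEmb (Sum.LiftRel (Eq : B → B → Prop) (ForestLe B k))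

section Aux

variable {X : Type*} {le : X → X → Prop}

theorem multisetEmb_refl (hrefl : Reflexive le) (μ : Multiset X) : MultisetEmb le μ μ :=
  ⟨μ, le_rfl, Multiset.rel_refl_of_refl_on fun x _ => hrefl x⟩

/-- Restricting the left side of `Multiset.Rel`. -/
theorem rel_of_le_left {r : X → X → Prop} {a b : Multiset X} (h : Multiset.Rel r a b)
    {a' : Multiset X} (ha : a' ≤ a) : ∃ b' ≤ b, Multiset.Rel r a' b' := by
  obtain ⟨c, rfl⟩ := Multiset.le_iff_exists_add.mp ha
  rw [Multiset.rel_add_left] at h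
  obtain ⟨b₀, b₁, h₀, _, rfl⟩ := h
  exact ⟨b₀, Multiset.le_add_right _ _, h₀⟩

theorem multisetEmb_trans (htrans : Transitive le) {μ₁ μ₂ μ₃ : Multiset X}
    (h₁ : MultisetEmb le μ₁ μ₂) (h₂ : MultisetEmb le μ₂ μ₃) : MultisetEmb le μ₁ μ₃ := by
  obtain ⟨ν, hν, hrel⟩ := h₁
  obtain ⟨ν', hν', hrel'⟩ := h₂
  obtain ⟨ν'', hν'', hrel''⟩ := rel_of_le_left hrel' hν
  refine ⟨ν'', le_trans hν'' hν', ?_⟩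
  have : IsTrans X le := ⟨fun _ _ _ h h' => htrans h h'⟩
  exact Multiset.Rel.trans le hrel hrel''

theorem forall₂_rel {r : X → X → Prop} : ∀ {l₁ l₂ : List X}, List.Forall₂ r l₁ l₂ →
    Multiset.Rel r (↑l₁) (↑l₂)
  | _, _, List.Forall₂.nil => Multiset.Rel.zero
  | _, _, List.Forall₂.cons h t => Multiset.Rel.cons h (forall₂_rel t)

theorem isWQO_multisetEmb (hrefl : Reflexive le) (htrans : Transitive le)
    (h : IsWQO le) : IsWQO (MultisetEmb le) := by
  have : IsRefl X le := ⟨hrefl⟩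
  have : IsTrans X le := ⟨fun _ _ _ h h' => htrans h h'⟩
  have hpwo : (Set.univ : Set X).PartiallyWellOrderedOn le :=
    Set.partiallyWellOrderedOn_iff_exists_lt.mpr fun f _ => h f
  have : IsPreorder X le := { refl := hrefl, trans := fun _ _ _ h h' => htrans h h' }
  have higman := hpwo.partiallyWellOrderedOn_sublistForall₂ (r := le)
  intro f
  obtain ⟨i, j, hij, hr⟩ := Set.partiallyWellOrderedOn_iff_exists_lt.mp higman (fun n => (f n).toList) (fun n x _ => Set.mem_univ x)
  obtain ⟨l, hforall, hsub⟩ := List.sublistForall₂_iff.mp hr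
  refine ⟨i, j, hij, ⟨↑l, ?_, ?_⟩⟩
  · calc (↑l : Multiset X) ≤ ↑(f j).toList := Multiset.coe_le.mpr hsub.subperm
    _ = f j := Multiset.coe_toList _
  · have := forall₂_rel hforall
    rwa [Multiset.coe_toList] at this

theorem isWQO_liftRel {A B : Type*} {la : A → A → Prop} {lb : B → B → Prop}
    (ha : IsWQO la) (hb : IsWQO lb) : IsWQO (Sum.LiftRel la lb) := by
  have hA : (Set.univ : Set A).PartiallyWellOrderedOn la := Set.partiallyWellOrderedOn_iff_exists_lt.mpr fun f _ => ha f
  have hB : (Set.univ : Set B).PartiallyWellOrderedOn lb := Set.partiallyWellOrderedOn_iff_exists_lt.mpr fun f _ => hb f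
  have h1 : (Sum.inl '' Set.univ : Set (A ⊕ B)).PartiallyWellOrderedOn (Sum.LiftRel la lb) :=
    hA.image_of_monotone_on fun a₁ _ a₂ _ h => Sum.LiftRel.inl h
  have h2 : (Sum.inr '' Set.univ : Set (A ⊕ B)).PartiallyWellOrderedOn (Sum.LiftRel la lb) :=
    hB.image_of_monotone_on fun a₁ _ a₂ _ h => Sum.LiftRel.inr h
  have := h1.union h2
  intro f
  refine Set.partiallyWellOrderedOn_iff_exists_lt.mp this f fun n => ?_
  cases f n with
  | inl a => exact Or.inl ⟨a, trivial, rfl⟩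
  | inr b => exact Or.inr ⟨b, trivial, rfl⟩

end Aux

theorem forestLe_refl_trans (B : Type) (k : ℕ) :
    Reflexive (ForestLe B k) ∧ Transitive (ForestLe B k) := by
  induction k with
  | zero =>
    constructor
    · exact fun μ => multisetEmb_refl (fun x => rfl) μ
    · exact fun _ _ _ => multisetEmb_trans (fun a b c h h' => h.trans h')
  | succ k ih =>
    have : IsRefl (Forest B k) (ForestLe B k) := ⟨ih.1⟩
    have : IsTrans (Forest B k) (ForestLe B k) := ⟨fun a b c h h' => ih.2 h h'⟩
    constructor
    · exact fun μ => multisetEmb_refl (fun x => Sum.LiftRel.refl _ _ x) μ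
    · exact fun _ _ _ => multisetEmb_trans (fun _ _ _ h h' => _root_.trans h h')

theorem forest_wqo (B : Type) [Fintype B] (k : ℕ) : IsWQO (ForestLe B k) := by
  have hB : IsWQO (Eq : B → B → Prop) := by
    intro f
    have : (Set.univ : Set B).PartiallyWellOrderedOn (Eq : B → B → Prop) :=
      Set.finite_univ.partiallyWellOrderedOn
    exact Set.partiallyWellOrderedOn_iff_exists_lt.mp this f fun n => Set.mem_univ _
  induction k with
  | zero =>
    exact isWQO_multisetEmb (fun x => rfl) (fun a b c h h' => h.trans h') hB
  | succ k ih =>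
    obtain ⟨hrefl, htrans⟩ := forestLe_refl_trans B k
    have : IsRefl (Forest B k) (ForestLe B k) := ⟨hrefl⟩
    have : IsTrans (Forest B k) (ForestLe B k) := ⟨fun a b c h h' => htrans h h'⟩
    exact isWQO_multisetEmb (fun x => Sum.LiftRel.refl _ _ x)
      (fun _ _ _ h h' => _root_.trans h h') (isWQO_liftRel hB ih)
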